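/- For every high-multiplicity scheduling instance on identical machines the following three claims hold: there exists a schedule x* minimizing Cmax such that for every machine i, ∑_j p j · n j ≤ m·(L x* i) + m·pmax and m·(L x* i) ≤ ∑_j p j · n j + m·pmax; there exists a schedule x* maximizing Cmin with the same property; and there exists a schedule x* minimizing Cenvy with the same property. (Equivalently, in each case every machine load lies within pmax of the average load (∑_j p j · n j)/m.) -/
import Mathlib


/-- A schedule assigns `x i j` jobs of type `j` to machine `i`, placing all `n j` jobs. -/
def IsSchedule {m d : ℕ} (n : Fin d → ℕ) (x : Fin m → Fin d → ℕ) : Prop :=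
  ∀ j, ∑ i, x i j = n j

/-- The load of machine `i` under schedule `x`. -/
def load {m d : ℕ} (p : Fin d → ℕ) (x : Fin m → Fin d → ℕ) (i : Fin m) : ℕ :=
  ∑ j, x i j * p j

/-- The makespan: the maximum machine load. -/
def Cmax {m d : ℕ} (p : Fin d → ℕ) (x : Fin m → Fin d → ℕ) : ℕ :=
  Finset.univ.sup (load p x)

/-- The minimum machine load. -/
noncomputable def Cmin {m d : ℕ} (p : Fin d → ℕ) (x : Fin m → Fin d → ℕ) : ℕ :=
  sInf (Set.range (load p x))

/-- The envy value: maximum load minus minimum load. -/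
noncomputable def Cenvy {m d : ℕ} (p : Fin d → ℕ) (x : Fin m → Fin d → ℕ) : ℕ :=
  Cmax p x - Cmin p x

-- split a sum over univ at two distinct points
lemma sum_split {m : ℕ} (f : Fin m → ℕ) (a b : Fin m) (hab : a ≠ b) :
    ∑ i, f i = f a + f b + ∑ i ∈ (Finset.univ.erase a).erase b, f i := by
  have hb : b ∈ Finset.univ.erase a := Finset.mem_erase.2 ⟨Ne.symm hab, Finset.mem_univ b⟩
  rw [← Finset.sum_erase_add _ _ (Finset.mem_univ a),
      ← Finset.sum_erase_add _ _ hb]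
  ring

lemma sum_split_one {d : ℕ} (f : Fin d → ℕ) (j : Fin d) :
    ∑ j', f j' = f j + ∑ j' ∈ Finset.univ.erase j, f j' := by
  rw [← Finset.sum_erase_add _ _ (Finset.mem_univ j)]; ring

-- total load of a schedule
lemma total_load {m d : ℕ} (p : Fin d → ℕ) (n : Fin d → ℕ) (x : Fin m → Fin d → ℕ)
    (hx : IsSchedule n x) : ∑ i, load p x i = ∑ j, p j * n j := by
  unfold load
  rw [Finset.sum_comm]
  refine Finset.sum_congr rfl fun j _ => ?_
  rw [← Finset.sum_mul, hx j, mul_comm]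

lemma cmin_le {m d : ℕ} (p : Fin d → ℕ) (x : Fin m → Fin d → ℕ) (i : Fin m) :
    Cmin p x ≤ load p x i := Nat.sInf_le (Set.mem_range_self i)

lemma le_cmax {m d : ℕ} (p : Fin d → ℕ) (x : Fin m → Fin d → ℕ) (i : Fin m) :
    load p x i ≤ Cmax p x := Finset.le_sup (Finset.mem_univ i)

lemma exists_cmin {m d : ℕ} (hm : 1 ≤ m) (p : Fin d → ℕ) (x : Fin m → Fin d → ℕ) :
    ∃ b, load p x b = Cmin p x := by
  have : Nonempty (Fin m) := ⟨⟨0, hm⟩⟩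
  have h : Cmin p x ∈ Set.range (load p x) := Nat.sInf_mem (Set.range_nonempty _)
  obtain ⟨b, hb⟩ := h
  exact ⟨b, hb⟩

lemma exists_cmax {m d : ℕ} (hm : 1 ≤ m) (p : Fin d → ℕ) (x : Fin m → Fin d → ℕ) :
    ∃ a, load p x a = Cmax p x := by
  obtain ⟨a, -, ha⟩ := Finset.exists_mem_eq_sup Finset.univ
    ⟨(⟨0, hm⟩ : Fin m), Finset.mem_univ _⟩ (load p x)
  exact ⟨a, ha.symm⟩

/-- Core balancing lemma. -/
lemma core {d m : ℕ} (hd : 1 ≤ d) (hm : 1 ≤ m) (p : Fin d → ℕ) (hp : ∀ j, 1 ≤ p j)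
    (n : Fin d → ℕ) (P : (Fin m → Fin d → ℕ) → Prop)
    (hne : ∃ x, IsSchedule n x ∧ P x)
    (hclosed : ∀ x x', IsSchedule n x → IsSchedule n x' → P x →
      Cmax p x' ≤ Cmax p x → Cmin p x ≤ Cmin p x' → P x') :
    ∃ x, IsSchedule n x ∧ P x ∧ Cmax p x ≤ Cmin p x + Finset.univ.sup p := by
  classical
  have hnem : Nonempty (Fin m) := ⟨⟨0, hm⟩⟩
  set Φ : (Fin m → Fin d → ℕ) → ℕ := fun x => ∑ i, (load p x i) ^ 2 with hΦ
  set S : Set ℕ := {k | ∃ x : Fin m → Fin d → ℕ, IsSchedule n x ∧ P x ∧ Φ x = k} with hS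
  have hSne : S.Nonempty := by
    obtain ⟨x, hx1, hx2⟩ := hne
    exact ⟨Φ x, x, hx1, hx2, rfl⟩
  obtain ⟨x, hx1, hx2, hx3⟩ : sInf S ∈ S := Nat.sInf_mem hSne
  refine ⟨x, hx1, hx2, ?_⟩
  by_contra hcon
  push_neg at hcon
  -- pick max and min load machines
  obtain ⟨a, ha⟩ := exists_cmax hm p x
  obtain ⟨b, hb⟩ := exists_cmin hm p x
  have hgap : load p x b + Finset.univ.sup p < load p x a := by
    rw [ha, hb]; exact hcon
  have hab : a ≠ b := by
    intro h; rw [h] at hgap; omega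
  -- there is a job on machine a
  have hpos : 0 < load p x a := by
    have : 1 ≤ Finset.univ.sup p := le_trans (hp ⟨0, hd⟩) (Finset.le_sup (Finset.mem_univ _))
    omega
  obtain ⟨j, -, hj⟩ : ∃ j ∈ Finset.univ, 0 < x a j * p j := by
    by_contra hc; push_neg at hc
    have : load p x a = 0 := by
      unfold load
      exact Finset.sum_eq_zero fun j hjj => Nat.le_zero.1 (hc j hjj)
    omega
  have hxaj : 1 ≤ x a j := by
    rcases Nat.eq_zero_or_pos (x a j) with h | h
    · rw [h] at hj; simp at hj
    · exact h
  have hpj : p j ≤ Finset.univ.sup p := Finset.le_sup (Finset.mem_univ j)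
  -- the exchanged schedule
  set x' : Fin m → Fin d → ℕ := fun i j' =>
    if i = a ∧ j' = j then x a j - 1
    else if i = b ∧ j' = j then x b j + 1 else x i j' with hx'
  have hx'a : ∀ j', j' ≠ j → x' a j' = x a j' := by
    intro j' hj'; simp [hx', hj']
  have hx'b : ∀ j', j' ≠ j → x' b j' = x b j' := by
    intro j' hj'; simp [hx', hj', hab.symm]
  have hx'aj : x' a j = x a j - 1 := by simp [hx']
  have hx'bj : x' b j = x b j + 1 := by simp [hx', hab.symm, hab]
  have hx'other : ∀ i, i ≠ a → i ≠ b → x' i = x i := by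
    intro i hia hib; funext j'; simp [hx', hia, hib]
  -- it is a schedule
  have hsched' : IsSchedule n x' := by
    intro j'
    rw [← hx1 j']
    rcases eq_or_ne j' j with rfl | hj'
    · rw [sum_split (fun i => x' i j') a b hab, sum_split (fun i => x i j') a b hab]
      have : ∑ i ∈ (Finset.univ.erase a).erase b, x' i j' =
          ∑ i ∈ (Finset.univ.erase a).erase b, x i j' := by
        refine Finset.sum_congr rfl fun i hi => ?_
        rw [Finset.mem_erase, Finset.mem_erase] at hi
        rw [hx'other i hi.2.1 hi.1]
      rw [this, hx'aj, hx'bj]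
      omega
    · refine Finset.sum_congr rfl fun i _ => ?_
      rcases eq_or_ne i a with rfl | hia
      · exact hx'a j' hj'
      rcases eq_or_ne i b with rfl | hib
      · exact hx'b j' hj'
      · rw [hx'other i hia hib]
  -- load computations
  have hpj1 : 1 ≤ p j := hp j
  have hpjload : p j ≤ load p x a := by
    unfold load
    calc p j ≤ x a j * p j := Nat.le_mul_of_pos_left _ hxaj
    _ ≤ _ := Finset.single_le_sum (f := fun j' => x a j' * p j')
        (fun _ _ => Nat.zero_le _) (Finset.mem_univ j)
  have hloada : load p x' a + p j = load p x a := by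
    unfold load
    rw [sum_split_one (fun j' => x' a j' * p j') j, sum_split_one (fun j' => x a j' * p j') j]
    have : ∑ j' ∈ Finset.univ.erase j, x' a j' * p j' =
        ∑ j' ∈ Finset.univ.erase j, x a j' * p j' := by
      refine Finset.sum_congr rfl fun j' hj' => ?_
      rw [hx'a j' (Finset.mem_erase.1 hj').1]
    rw [this, hx'aj]
    have : (x a j - 1) * p j + p j = x a j * p j := by
      cases' Nat.exists_eq_add_of_le hxaj with k hk
      rw [hk]
      have h1 : 1 + k - 1 = k := by omega
      rw [h1]; ring
    omega
  have hloadb : load p x' b = load p x b + p j := by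
    unfold load
    rw [sum_split_one (fun j' => x' b j' * p j') j, sum_split_one (fun j' => x b j' * p j') j]
    have : ∑ j' ∈ Finset.univ.erase j, x' b j' * p j' =
        ∑ j' ∈ Finset.univ.erase j, x b j' * p j' := by
      refine Finset.sum_congr rfl fun j' hj' => ?_
      rw [hx'b j' (Finset.mem_erase.1 hj').1]
    rw [this, hx'bj]
    ring
  have hloadother : ∀ i, i ≠ a → i ≠ b → load p x' i = load p x i := by
    intro i hia hib; unfold load; rw [hx'other i hia hib]
  -- bounds on new loads
  have hA : load p x' a < load p x a := by omega
  have hAge : load p x b < load p x' a := by omega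
  have hB : load p x' b < load p x a := by omega
  have hBge : load p x b < load p x' b := by omega
  -- Cmax doesn't increase
  have hcmax : Cmax p x' ≤ Cmax p x := by
    apply Finset.sup_le
    intro i _
    rcases eq_or_ne i a with rfl | hia
    · exact le_trans (le_of_lt hA) (le_cmax p x i)
    rcases eq_or_ne i b with rfl | hib
    · rw [hloadb]; rw [← ha]; omega
    · rw [hloadother i hia hib]; exact le_cmax p x i
  -- Cmin doesn't decrease
  have hcmin : Cmin p x ≤ Cmin p x' := by
    apply le_csInf (Set.range_nonempty _)
    rintro k ⟨i, rfl⟩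
    rcases eq_or_ne i a with rfl | hia
    · rw [← hb]; omega
    rcases eq_or_ne i b with rfl | hib
    · rw [hloadb, ← hb]; omega
    · rw [hloadother i hia hib]; exact cmin_le p x i
  have hP' : P x' := hclosed x x' hx1 hsched' hx2 hcmax hcmin
  -- Φ strictly decreases
  have hΦlt : Φ x' < Φ x := by
    rw [hΦ]
    simp only
    rw [sum_split (fun i => load p x' i ^ 2) a b hab,
        sum_split (fun i => load p x i ^ 2) a b hab]
    have heq : ∑ i ∈ (Finset.univ.erase a).erase b, load p x' i ^ 2 =
        ∑ i ∈ (Finset.univ.erase a).erase b, load p x i ^ 2 := by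
      refine Finset.sum_congr rfl fun i hi => ?_
      rw [Finset.mem_erase, Finset.mem_erase] at hi
      rw [hloadother i hi.2.1 hi.1]
    rw [heq]
    have hkey : load p x' a ^ 2 + load p x' b ^ 2 < load p x a ^ 2 + load p x b ^ 2 := by
      have e1 : load p x a = load p x' a + p j := by omega
      have e2 : load p x' b = load p x b + p j := hloadb
      rw [e1, e2]
      have hmul : load p x b * p j < load p x' a * p j :=
        Nat.mul_lt_mul_of_lt_of_le hAge le_rfl hpj1
      calc load p x' a ^ 2 + (load p x b + p j) ^ 2
          = load p x' a ^ 2 + load p x b ^ 2 + 2 * (load p x b * p j) + p j ^ 2 := by ring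
        _ < load p x' a ^ 2 + load p x b ^ 2 + 2 * (load p x' a * p j) + p j ^ 2 := by omega
        _ = (load p x' a + p j) ^ 2 + load p x b ^ 2 := by ring
    omega
  have : sInf S ≤ Φ x' := Nat.sInf_le ⟨x', hsched', hP', rfl⟩
  omega

/-- Convert the balance condition into the per-machine inequalities. -/
lemma balance_to_bounds {d m : ℕ} (hm : 1 ≤ m) (p : Fin d → ℕ) (n : Fin d → ℕ)
    (x : Fin m → Fin d → ℕ) (hx : IsSchedule n x)
    (hbal : Cmax p x ≤ Cmin p x + Finset.univ.sup p) (i : Fin m) :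
    (∑ j, p j * n j) ≤ m * load p x i + m * Finset.univ.sup p ∧
    m * load p x i ≤ (∑ j, p j * n j) + m * Finset.univ.sup p := by
  have htot : ∑ i, load p x i = ∑ j, p j * n j := total_load p n x hx
  have h1 : ∑ j, p j * n j ≤ m * Cmax p x := by
    rw [← htot]
    calc ∑ i, load p x i ≤ ∑ _i : Fin m, Cmax p x :=
          Finset.sum_le_sum fun i _ => le_cmax p x i
    _ = m * Cmax p x := by simp [Finset.sum_const, mul_comm]
  have h2 : m * Cmin p x ≤ ∑ j, p j * n j := by
    rw [← htot]
    calc m * Cmin p x = ∑ _i : Fin m, Cmin p x := by simp [Finset.sum_const, mul_comm]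
    _ ≤ ∑ i, load p x i := Finset.sum_le_sum fun i _ => cmin_le p x i
  have h3 : m * Cmax p x ≤ m * Cmin p x + m * Finset.univ.sup p := by
    calc m * Cmax p x ≤ m * (Cmin p x + Finset.univ.sup p) := Nat.mul_le_mul_left m hbal
    _ = _ := by ring
  have h4 : m * Cmin p x ≤ m * load p x i := Nat.mul_le_mul_left m (cmin_le p x i)
  have h5 : m * load p x i ≤ m * Cmax p x := Nat.mul_le_mul_left m (le_cmax p x i)
  omega

/-- There is at least one schedule: put everything on machine 0. -/
lemma exists_schedule {d m : ℕ} (hm : 1 ≤ m) (n : Fin d → ℕ) :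
    ∃ x : Fin m → Fin d → ℕ, IsSchedule n x := by
  classical
  refine ⟨fun i j => if i = (⟨0, hm⟩ : Fin m) then n j else 0, fun j => ?_⟩
  simp

/-- Cmin is bounded by the total processing time. -/
lemma cmin_le_total {d m : ℕ} (hm : 1 ≤ m) (p : Fin d → ℕ) (n : Fin d → ℕ)
    (x : Fin m → Fin d → ℕ) (hx : IsSchedule n x) : Cmin p x ≤ ∑ j, p j * n j := by
  obtain ⟨b, hb⟩ := exists_cmin hm p x
  rw [← hb, ← total_load p n x hx]
  exact Finset.single_le_sum (f := load p x) (fun _ _ => Nat.zero_le _) (Finset.mem_univ b)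

theorem exists_optimal_schedules_loads_near_average (d m : ℕ) (hd : 1 ≤ d) (hm : 1 ≤ m)
    (p : Fin d → ℕ) (hp : ∀ j, 1 ≤ p j) (n : Fin d → ℕ) :
    (∃ xstar : Fin m → Fin d → ℕ, IsSchedule n xstar ∧
      (∀ x : Fin m → Fin d → ℕ, IsSchedule n x → Cmax p xstar ≤ Cmax p x) ∧
      ∀ i : Fin m,
        (∑ j, p j * n j) ≤ m * load p xstar i + m * Finset.univ.sup p ∧
        m * load p xstar i ≤ (∑ j, p j * n j) + m * Finset.univ.sup p) ∧
    (∃ xstar : Fin m → Fin d → ℕ, IsSchedule n xstar ∧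
      (∀ x : Fin m → Fin d → ℕ, IsSchedule n x → Cmin p x ≤ Cmin p xstar) ∧
      ∀ i : Fin m,
        (∑ j, p j * n j) ≤ m * load p xstar i + m * Finset.univ.sup p ∧
        m * load p xstar i ≤ (∑ j, p j * n j) + m * Finset.univ.sup p) ∧
    (∃ xstar : Fin m → Fin d → ℕ, IsSchedule n xstar ∧
      (∀ x : Fin m → Fin d → ℕ, IsSchedule n x → Cenvy p xstar ≤ Cenvy p x) ∧
      ∀ i : Fin m,
        (∑ j, p j * n j) ≤ m * load p xstar i + m * Finset.univ.sup p ∧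
        m * load p xstar i ≤ (∑ j, p j * n j) + m * Finset.univ.sup p) := by
  obtain ⟨x₀, hx₀⟩ := exists_schedule hm (d := d) n
  refine ⟨?_, ?_, ?_⟩
  · -- Cmax minimization
    set c := sInf {k | ∃ x : Fin m → Fin d → ℕ, IsSchedule n x ∧ Cmax p x = k} with hc
    have hcmem : c ∈ {k | ∃ x : Fin m → Fin d → ℕ, IsSchedule n x ∧ Cmax p x = k} :=
      Nat.sInf_mem ⟨Cmax p x₀, x₀, hx₀, rfl⟩
    have hopt : ∀ y, IsSchedule n y → c ≤ Cmax p y := fun y hy =>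
      Nat.sInf_le ⟨y, hy, rfl⟩
    obtain ⟨x, hx1, hx2, hx3⟩ := core hd hm p hp n (fun x => Cmax p x ≤ c)
      (by obtain ⟨z, hz1, hz2⟩ := hcmem; exact ⟨z, hz1, le_of_eq hz2⟩)
      (fun x x' _ _ hPx hmax _ => le_trans hmax hPx)
    exact ⟨x, hx1, fun y hy => le_trans hx2 (hopt y hy),
      balance_to_bounds hm p n x hx1 hx3⟩
  · -- Cmin maximization
    set c := sSup {k | ∃ x : Fin m → Fin d → ℕ, IsSchedule n x ∧ Cmin p x = k} with hc
    have hbdd : BddAbove {k | ∃ x : Fin m → Fin d → ℕ, IsSchedule n x ∧ Cmin p x = k} := by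
      refine ⟨∑ j, p j * n j, ?_⟩
      rintro k ⟨x, hx1, rfl⟩
      exact cmin_le_total hm p n x hx1
    have hcmem : c ∈ {k | ∃ x : Fin m → Fin d → ℕ, IsSchedule n x ∧ Cmin p x = k} :=
      Nat.sSup_mem ⟨Cmin p x₀, x₀, hx₀, rfl⟩ hbdd
    have hopt : ∀ y, IsSchedule n y → Cmin p y ≤ c := fun y hy =>
      le_csSup hbdd ⟨y, hy, rfl⟩
    obtain ⟨x, hx1, hx2, hx3⟩ := core hd hm p hp n (fun x => c ≤ Cmin p x)
      (by obtain ⟨z, hz1, hz2⟩ := hcmem; exact ⟨z, hz1, le_of_eq hz2.symm⟩)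
      (fun x x' _ _ hPx _ hmin => le_trans hPx hmin)
    exact ⟨x, hx1, fun y hy => le_trans (hopt y hy) hx2,
      balance_to_bounds hm p n x hx1 hx3⟩
  · -- Cenvy minimization
    set c := sInf {k | ∃ x : Fin m → Fin d → ℕ, IsSchedule n x ∧ Cenvy p x = k} with hc
    have hcmem : c ∈ {k | ∃ x : Fin m → Fin d → ℕ, IsSchedule n x ∧ Cenvy p x = k} :=
      Nat.sInf_mem ⟨Cenvy p x₀, x₀, hx₀, rfl⟩
    have hopt : ∀ y, IsSchedule n y → c ≤ Cenvy p y := fun y hy =>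
      Nat.sInf_le ⟨y, hy, rfl⟩
    obtain ⟨x, hx1, hx2, hx3⟩ := core hd hm p hp n (fun x => Cenvy p x ≤ c)
      (by obtain ⟨z, hz1, hz2⟩ := hcmem; exact ⟨z, hz1, le_of_eq hz2⟩)
      (fun x x' _ _ hPx hmax hmin => by
        refine le_trans ?_ hPx
        exact tsub_le_tsub hmax hmin)
    exact ⟨x, hx1, fun y hy => le_trans hx2 (hopt y hy),
      balance_to_bounds hm p n x hx1 hx3⟩
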